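/- A ring R is left virtually semisimple if and only if every free left R-module is virtually semisimple. -/

import Mathlib

universe u v w

/-- A left `R`-module `M` is *virtually semisimple* if every submodule of `M` is
isomorphic, as an `R`-module, to a direct summand of `M`. -/
def IsVirtuallySemisimple (R : Type u) [Ring R] (M : Type v) [AddCommGroup M] [Module R M] :
    Prop :=
  ∀ N : Submodule R M, ∃ K : Submodule R M, (∃ K' : Submodule R M, IsCompl K K') ∧
    Nonempty (N ≃ₗ[R] K)

/-- A module is *completely virtually semisimple* if every submodule is virtually semisimple. -/
def IsCompletelyVirtuallySemisimple (R : Type u) [Ring R] (M : Type v) [AddCommGroup M]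
    [Module R M] : Prop :=
  ∀ N : Submodule R M, IsVirtuallySemisimple R N

section Aux

variable {R : Type u} [Ring R]

lemma summand_projective (K K' : Submodule R R) (hc : IsCompl K K') :
    Module.Projective R K :=
  Module.Projective.of_split K.subtype (K.projectionOnto K' hc) (by ext x; simp)

lemma lsum_lsingle_coord {ι : Type w} [DecidableEq ι] (p : ι → Submodule R R)
    (f : Π₀ α, ↥(p α)) (j : ι) :
    (DFinsupp.lsum ℕ (fun α => Finsupp.lsingle α ∘ₗ (p α).subtype) f) j = ↑(f j) := by
  induction f using DFinsupp.induction with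
  | h0 => simp
  | ha α z f hfα hz ih =>
    rw [map_add, Finsupp.add_apply, DFinsupp.lsum_single, DFinsupp.add_apply, ih]
    rcases eq_or_ne α j with rfl | hne
    · simp [hfα]
    · simp [Finsupp.single_apply, hne, DFinsupp.single_eq_of_ne hne]

lemma key (hR : IsVirtuallySemisimple R R) (ι : Type w) :
    IsVirtuallySemisimple R (ι →₀ R) := by
  classical
  obtain ⟨lo, wo⟩ := exists_wellOrder ι
  intro N
  -- filtration and coordinate ideals
  set S : ι → Submodule R (ι →₀ R) := fun α => N ⊓ Finsupp.supported R R {i | i ≤ α} with hS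
  set π : ∀ α : ι, ↥(S α) →ₗ[R] R := fun α => Finsupp.lapply α ∘ₗ (S α).subtype with hπ
  set I : ι → Submodule R R := fun α => LinearMap.range (π α) with hI
  -- choose complemented copies of the ideals
  have hch := fun α => hR (I α)
  choose K hKc eK using hch
  choose K' hK' using hKc
  -- each ideal is projective, choose sections
  have hproj : ∀ α, Module.Projective R (I α) := fun α => by
    haveI := summand_projective (K α) (K' α) (hK' α)
    exact Module.Projective.of_equiv (Classical.choice (eK α)).symm
  have hsec : ∀ α, ∃ σ : ↥(I α) →ₗ[R] ↥(S α), ∀ z : ↥(I α), π α (σ z) = (z : R) := by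
    intro α
    haveI := hproj α
    obtain ⟨σ, hσ⟩ := Module.projective_lifting_property ((π α).rangeRestrict)
      (LinearMap.id : ↥(I α) →ₗ[R] ↥(I α)) (LinearMap.surjective_rangeRestrict _)
    refine ⟨σ, fun z => ?_⟩
    have := congrArg Subtype.val (LinearMap.congr_fun hσ z)
    simpa using this
  choose σ hσ using hsec
  -- coordinates of members of S α vanish above α
  have hScoord : ∀ (α : ι) (y : ↥(S α)) (j : ι), ¬ j ≤ α → (y : ι →₀ R) j = 0 := by
    intro α y j hj
    exact (Finsupp.mem_supported' R _).1 y.2.2 j hj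
  -- the assembled map
  set Ψ : (Π₀ α, ↥(I α)) →ₗ[R] (ι →₀ R) :=
    DFinsupp.lsum ℕ (fun α => (S α).subtype ∘ₗ σ α) with hΨ
  have hΨsingle : ∀ (α : ι) (z : ↥(I α)), Ψ (DFinsupp.single α z) = ↑(σ α z) := by
    intro α z; rw [hΨ, DFinsupp.lsum_single]; rfl
  have hσcoord : ∀ (α : ι) (z : ↥(I α)), ((σ α z : ι →₀ R)) α = (z : R) := by
    intro α z; exact hσ α z
  -- coordinate formula for Ψ at an upper bound of the support
  have hΨcoord : ∀ (f : Π₀ α, ↥(I α)) (j : ι), (∀ β, f β ≠ 0 → β ≤ j) →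
      (Ψ f) j = ((f j : R)) := by
    intro f
    induction f using DFinsupp.induction with
    | h0 => simp
    | ha α z f hfα hz ih =>
      intro j hj
      have hαj : α ≤ j := hj α (by simp [hfα, hz])
      have hf_le : ∀ β, f β ≠ 0 → β ≤ j := by
        intro β hβ
        refine hj β ?_
        rcases eq_or_ne β α with rfl | hne
        · simp [hfα] at hβ
        · simpa [DFinsupp.single_eq_of_ne hne] using hβ
      rw [map_add, Finsupp.add_apply, hΨsingle, DFinsupp.add_apply, ih j hf_le]
      rcases eq_or_lt_of_le hαj with rfl | hlt
      · simp [hσcoord, hfα]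
      · rw [hScoord α (σ α z) j (not_le.2 hlt), DFinsupp.single_eq_of_ne (ne_of_lt hlt).symm]
        simp
  -- injectivity of Ψ
  have hΨinj : Function.Injective Ψ := by
    rw [← LinearMap.ker_eq_bot, eq_bot_iff]
    intro f hf
    rw [LinearMap.mem_ker] at hf
    rw [Submodule.mem_bot]
    by_contra hne
    have hsup : f.support.Nonempty :=
      Finset.nonempty_iff_ne_empty.2 (fun h => hne (DFinsupp.support_eq_empty.1 h))
    set j := f.support.max' hsup with hj
    have hcoord := hΨcoord f j (fun β hβ => Finset.le_max' _ β (DFinsupp.mem_support_iff.2 hβ))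
    rw [hf] at hcoord
    have h0 : (f j : R) = 0 := by simpa using hcoord.symm
    exact DFinsupp.mem_support_iff.1 (f.support.max'_mem hsup) (Subtype.ext h0)
  -- the range of Ψ is N
  have hrange_le : LinearMap.range Ψ ≤ N := by
    rintro _ ⟨f, rfl⟩
    induction f using DFinsupp.induction with
    | h0 => simp
    | ha α z f hfα hz ih =>
      rw [map_add]
      exact N.add_mem (by rw [hΨsingle]; exact (σ α z).2.1) ih
  have hle_range : ∀ α : ι, ∀ x ∈ N, (∀ i ∈ x.support, i ≤ α) → x ∈ LinearMap.range Ψ := by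
    intro α
    induction α using WellFoundedLT.induction with
    | ind α ih =>
      intro x hxN hsupp
      have hxS : x ∈ S α := ⟨hxN, (Finsupp.mem_supported R x).2 (fun i hi => hsupp i hi)⟩
      have hzI : x α ∈ I α := ⟨⟨x, hxS⟩, rfl⟩
      set y : ι →₀ R := ↑(σ α ⟨x α, hzI⟩) with hy
      have hyr : y ∈ LinearMap.range Ψ := ⟨DFinsupp.single α ⟨x α, hzI⟩, hΨsingle α _⟩
      have hyN : y ∈ N := (σ α ⟨x α, hzI⟩).2.1
      have hyα : y α = x α := hσcoord α ⟨x α, hzI⟩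
      by_cases hxy : x - y = 0
      · rw [sub_eq_zero] at hxy; rw [hxy]; exact hyr
      · have hsub0 : ∀ j, ¬ j ≤ α → (x - y) j = 0 := by
          intro j hjle
          rw [Finsupp.sub_apply, hScoord α _ j hjle]
          have hxj : x j = 0 := by
            by_contra hxj
            exact hjle (hsupp j (Finsupp.mem_support_iff.2 hxj))
          rw [hxj, sub_zero]
        have hα0 : (x - y) α = 0 := by rw [Finsupp.sub_apply, hyα, sub_self]
        have hsupn : (x - y).support.Nonempty := Finsupp.support_nonempty_iff.2 hxy
        set β := (x - y).support.max' hsupn with hβ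
        have hβs : β ∈ (x - y).support := (x - y).support.max'_mem hsupn
        have hβα : β < α := by
          have h1 : β ≤ α := by
            by_contra h
            exact Finsupp.mem_support_iff.1 hβs (hsub0 β h)
          rcases h1.lt_or_eq with h | h
          · exact h
          · exact absurd (by rw [h]; exact hα0) (Finsupp.mem_support_iff.1 hβs)
        have h1 : x - y ∈ LinearMap.range Ψ := ih β hβα (x - y) (N.sub_mem hxN hyN)
          (fun i hi => Finset.le_max' _ i hi)
        have h2 := add_mem h1 hyr
        simpa [sub_add_cancel] using h2
  have hrange : LinearMap.range Ψ = N := by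
    refine le_antisymm hrange_le (fun x hx => ?_)
    by_cases hx0 : x = 0
    · rw [hx0]; exact zero_mem _
    · have hsupn : x.support.Nonempty := Finsupp.support_nonempty_iff.2 hx0
      exact hle_range (x.support.max' hsupn) x hx (fun i hi => Finset.le_max' _ i hi)
  -- the complementary pair built from the K α
  set ΨK : (Π₀ α, ↥(K α)) →ₗ[R] (ι →₀ R) :=
    DFinsupp.lsum ℕ (fun α => Finsupp.lsingle α ∘ₗ (K α).subtype) with hΨK
  set ΨK' : (Π₀ α, ↥(K' α)) →ₗ[R] (ι →₀ R) :=
    DFinsupp.lsum ℕ (fun α => Finsupp.lsingle α ∘ₗ (K' α).subtype) with hΨK'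
  have hKcoord : ∀ (f : Π₀ α, ↥(K α)) j, (ΨK f) j = ((f j : R)) :=
    fun f j => lsum_lsingle_coord K f j
  have hK'coord : ∀ (f : Π₀ α, ↥(K' α)) j, (ΨK' f) j = ((f j : R)) :=
    fun f j => lsum_lsingle_coord K' f j
  have hKinj : Function.Injective ΨK := by
    intro f g hfg
    ext j
    have h1 : (ΨK f) j = (ΨK g) j := by rw [hfg]
    rw [hKcoord, hKcoord] at h1
    exact congrArg Subtype.val (Subtype.ext h1 : f j = g j) ▸ rfl
  have hdisj : Disjoint (LinearMap.range ΨK) (LinearMap.range ΨK') := by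
    rw [Submodule.disjoint_def]
    rintro x ⟨f, rfl⟩ hx'
    obtain ⟨g, hg⟩ := hx'
    ext j
    have h1 : ((f j : R)) ∈ K' j := by
      rw [← hKcoord f j, ← hg, hK'coord]; exact (g j).2
    have h2 : ((f j : R)) = 0 :=
      Submodule.disjoint_def.1 (hK' j).disjoint _ (f j).2 h1
    rw [hKcoord, h2, Finsupp.zero_apply]
  have hcodisj : Codisjoint (LinearMap.range ΨK) (LinearMap.range ΨK') := by
    rw [codisjoint_iff, eq_top_iff]
    rintro x -
    induction x using Finsupp.induction with
    | zero => exact zero_mem _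
    | single_add a b f haf hb ih =>
      refine add_mem ?_ ih
      have hb' : b ∈ K a ⊔ K' a := by rw [(hK' a).sup_eq_top]; trivial
      obtain ⟨y0, hy0, z0, hz0, rfl⟩ := Submodule.mem_sup.1 hb'
      rw [Finsupp.single_add]
      refine add_mem (Submodule.mem_sup_left ⟨DFinsupp.single a ⟨y0, hy0⟩, ?_⟩)
        (Submodule.mem_sup_right ⟨DFinsupp.single a ⟨z0, hz0⟩, ?_⟩)
      · rw [hΨK, DFinsupp.lsum_single]; rfl
      · rw [hΨK', DFinsupp.lsum_single]; rfl
  refine ⟨LinearMap.range ΨK, ⟨LinearMap.range ΨK', ⟨hdisj, hcodisj⟩⟩, ⟨?_⟩⟩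
  have e1 : ↥N ≃ₗ[R] (Π₀ α, ↥(I α)) :=
    (LinearEquiv.ofEq _ _ hrange.symm).trans (LinearEquiv.ofInjective Ψ hΨinj).symm
  have e2 : (Π₀ α, ↥(I α)) ≃ₗ[R] (Π₀ α, ↥(K α)) :=
    DFinsupp.mapRange.linearEquiv (fun α => Classical.choice (eK α))
  have e3 : (Π₀ α, ↥(K α)) ≃ₗ[R] ↥(LinearMap.range ΨK) := LinearEquiv.ofInjective ΨK hKinj
  exact (e1.trans e2).trans e3

lemma vss_transfer {M : Type v} {M' : Type w} [AddCommGroup M] [Module R M]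
    [AddCommGroup M'] [Module R M'] (e : M ≃ₗ[R] M')
    (h : IsVirtuallySemisimple R M) : IsVirtuallySemisimple R M' := by
  intro N
  obtain ⟨K, ⟨K', hc⟩, ⟨g⟩⟩ := h (N.map (e.symm : M' →ₗ[R] M))
  refine ⟨K.map (e : M →ₗ[R] M'), ⟨K'.map (e : M →ₗ[R] M'),
    (Submodule.orderIsoMapComap e).isCompl hc⟩,
    ⟨((e.symm.submoduleMap N).trans g).trans (e.submoduleMap K)⟩⟩

end Aux

/-- A ring `R` is left virtually semisimple iff every free left `R`-module is virtually
semisimple. -/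
theorem stmt_10 (R : Type u) [Ring R] :
    IsVirtuallySemisimple R R ↔
      ∀ (M : Type (max u v)) [AddCommGroup M] [Module R M], Module.Free R M →
        IsVirtuallySemisimple R M := by
  constructor
  · intro hR M _ _ hfree
    haveI := hfree
    exact vss_transfer (Module.Free.chooseBasis R M).repr.symm (key hR _)
  · intro h
    exact vss_transfer (ULift.moduleEquiv : ULift.{v} R ≃ₗ[R] R)
      (h (ULift.{v} R) inferInstance)
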